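/- Let L = {ℓ₀,…,ℓ_t} be a nonempty multiset of even integers each at least 4, set ε = 2(t+1)(max(L)+3) − 1 and m = ε − Σ_{ℓ∈L} ℓ. Assume for each i there exists an α-labeling Γ_i of the disjoint union of an ℓ_i-cycle and a (k−ℓ_i)-path with k = 2max(L)+5, having parts [0, (k−1)/2] and [(k+1)/2, k] and path end-vertices (k−1)/4 and 3(k−1)/4+1. Then there exists an α-labeling of the disjoint union of one cycle of each length in L and an m-path, with parts the intervals [0, (ε−1)/2] and [(ε+1)/2, ε], edge differences exactly {1,…,ε}, and path end-vertices max(L)/2 + 1 and (ε + max(L) + 3)/2. -/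

import Mathlib

/-- Edges of a cycle given by the list of its vertices (in cyclic order). -/
def cycleEdges (l : List ℤ) : Multiset (ℤ × ℤ) := ↑(l.zip (l.rotate 1))

/-- Edges of a path given by the list of its vertices. -/
def pathEdges (l : List ℤ) : Multiset (ℤ × ℤ) := ↑(l.zip l.tail)

/-- Absolute edge differences of a multiset of edges. -/
def diffs (E : Multiset (ℤ × ℤ)) : Multiset ℤ := E.map fun p => |p.1 - p.2|

/-! ### Auxiliary lemmas -/

/-- The shift function: low labels get `+a`, high labels get `+b`. -/
def shf (u a b x : ℤ) : ℤ := if x ≤ 2*u then x + a else x + b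

lemma pathEdges_cons_cons (a b : ℤ) (l : List ℤ) :
    pathEdges (a :: b :: l) = (a, b) ::ₘ pathEdges (b :: l) := rfl

lemma pathEdges_append (P Q : List ℤ) (x y : ℤ)
    (hx : P.getLast? = some x) (hy : Q.head? = some y) :
    pathEdges (P ++ Q) = (x, y) ::ₘ (pathEdges P + pathEdges Q) := by
  revert hx
  induction P with
  | nil => intro hx; simp at hx
  | cons p P ih =>
    intro hx
    cases P with
    | nil =>
      cases Q with
      | nil => simp at hy
      | cons q Q' =>
        simp only [List.getLast?_singleton, Option.some_inj] at hx
        simp only [List.head?_cons, Option.some_inj] at hy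
        rw [List.singleton_append, pathEdges_cons_cons, hx, hy]
        simp [pathEdges]
    | cons p' P' =>
      rw [List.getLast?_cons_cons] at hx
      have h2 := ih hx
      show pathEdges (p :: p' :: (P' ++ Q)) = _
      rw [pathEdges_cons_cons, ← List.cons_append, h2, pathEdges_cons_cons,
        Multiset.cons_add, Multiset.cons_swap]

lemma cycleEdges_map (f : ℤ → ℤ) (C : List ℤ) :
    cycleEdges (C.map f) = (cycleEdges C).map (Prod.map f f) := by
  simp [cycleEdges, ← List.map_rotate, List.zip_map]

lemma pathEdges_map (f : ℤ → ℤ) (P : List ℤ) :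
    pathEdges (P.map f) = (pathEdges P).map (Prod.map f f) := by
  unfold pathEdges
  rw [← List.map_tail, List.zip_map, Multiset.map_coe]

lemma Icc_split (a b c : ℤ) (h1 : a ≤ b + 1) (h2 : b ≤ c) :
    (Finset.Icc a c).val = (Finset.Icc a b).val + (Finset.Icc (b+1) c).val := by
  have hdisj : Disjoint (Finset.Icc a b) (Finset.Icc (b+1) c) := by
    rw [Finset.disjoint_left]
    intro x hx hx'
    simp only [Finset.mem_Icc] at hx hx'
    omega
  have : Finset.Icc a c = (Finset.Icc a b).disjUnion (Finset.Icc (b+1) c) hdisj := by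
    ext x
    simp only [Finset.mem_Icc, Finset.mem_disjUnion]
    omega
  rw [this]; rfl

lemma Icc_map_add (x y c : ℤ) :
    (Finset.Icc x y).val.map (fun z => z + c) = (Finset.Icc (x+c) (y+c)).val := by
  rw [← Finset.map_add_right_Icc x y c, Finset.map_val]
  rfl

lemma foldr_max_mem (l : List ℕ) (h : l ≠ []) :
    l.foldr max 0 ∈ l ∨ l.foldr max 0 = 0 := by
  induction l with
  | nil => simp at h
  | cons x xs ih =>
    rw [List.foldr_cons]
    rcases max_choice x (xs.foldr max 0) with hm | hm
    · rw [hm]; left; exact List.mem_cons_self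
    · rw [hm]
      cases xs with
      | nil => right; rfl
      | cons y ys =>
        rcases ih (by simp) with h1 | h1
        · left; exact List.mem_cons_of_mem x h1
        · right; exact h1

/-- Shifting a single block. -/
lemma blockShift (u a b : ℤ) (hu : 1 ≤ u) (hab : a ≤ b) (C P : List ℤ)
    (hCP : (↑(C ++ P) : Multiset ℤ) = (Finset.Icc (0:ℤ) (4*u+1)).val)
    (hbip : ∀ p ∈ cycleEdges C + pathEdges P,
      (p.1 ∈ Finset.Icc (0:ℤ) (2*u) ∧ p.2 ∈ Finset.Icc (2*u+1) (4*u+1)) ∨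
      (p.1 ∈ Finset.Icc (2*u+1) (4*u+1) ∧ p.2 ∈ Finset.Icc (0:ℤ) (2*u)))
    (hdiff : diffs (cycleEdges C + pathEdges P) = (Finset.Icc (1:ℤ) (4*u+1)).val)
    (hhead : P.head? = some u) (hlast : P.getLast? = some (3*u+1)) :
    ((↑(C.map (shf u a b)) + ↑(P.map (shf u a b)) : Multiset ℤ)
        = (Finset.Icc a (a+2*u)).val + (Finset.Icc (b+2*u+1) (b+4*u+1)).val) ∧
    (∀ p ∈ cycleEdges (C.map (shf u a b)) + pathEdges (P.map (shf u a b)),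
      (p.1 ∈ Finset.Icc a (a+2*u) ∧ p.2 ∈ Finset.Icc (b+2*u+1) (b+4*u+1)) ∨
      (p.1 ∈ Finset.Icc (b+2*u+1) (b+4*u+1) ∧ p.2 ∈ Finset.Icc a (a+2*u))) ∧
    (diffs (cycleEdges (C.map (shf u a b)) + pathEdges (P.map (shf u a b)))
        = (Finset.Icc (b-a+1) (b-a+4*u+1)).val) ∧
    (P.map (shf u a b)).head? = some (a+u) ∧
    (P.map (shf u a b)).getLast? = some (b+3*u+1) := by
  have hedges : cycleEdges (C.map (shf u a b)) + pathEdges (P.map (shf u a b))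
      = (cycleEdges C + pathEdges P).map (Prod.map (shf u a b) (shf u a b)) := by
    rw [cycleEdges_map, pathEdges_map, Multiset.map_add]
  refine ⟨?_, ?_, ?_, ?_, ?_⟩
  · -- vertices
    have h0 : (↑(C.map (shf u a b)) + ↑(P.map (shf u a b)) : Multiset ℤ)
        = ((Finset.Icc (0:ℤ) (4*u+1)).val).map (shf u a b) := by
      rw [← hCP, Multiset.map_coe, List.map_append, ← Multiset.coe_add]
    rw [h0, Icc_split 0 (2*u) (4*u+1) (by omega) (by omega), Multiset.map_add]
    have e1 : Multiset.map (shf u a b) (Finset.Icc (0:ℤ) (2*u)).val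
        = Multiset.map (fun z => z + a) (Finset.Icc (0:ℤ) (2*u)).val := by
      refine Multiset.map_congr rfl (fun x hx => ?_)
      rw [Finset.mem_val, Finset.mem_Icc] at hx
      simp only [shf]
      rw [if_pos (by omega)]
    have e2 : Multiset.map (shf u a b) (Finset.Icc (2*u+1) (4*u+1)).val
        = Multiset.map (fun z => z + b) (Finset.Icc (2*u+1) (4*u+1)).val := by
      refine Multiset.map_congr rfl (fun x hx => ?_)
      rw [Finset.mem_val, Finset.mem_Icc] at hx
      simp only [shf]
      rw [if_neg (by omega)]
    rw [e1, e2, Icc_map_add 0 (2*u) a, Icc_map_add (2*u+1) (4*u+1) b,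
      show (0:ℤ)+a = a by ring, show 2*u+a = a+2*u by ring,
      show 2*u+1+b = b+2*u+1 by ring, show 4*u+1+b = b+4*u+1 by ring]
  · -- bipartition
    intro p hp
    rw [hedges] at hp
    obtain ⟨q, hq, rfl⟩ := Multiset.mem_map.1 hp
    rcases hbip q hq with ⟨h1, h2⟩ | ⟨h1, h2⟩
    · left
      simp only [Finset.mem_Icc] at h1 h2 ⊢
      simp only [Prod.map_fst, Prod.map_snd, shf]
      constructor <;> split_ifs <;> omega
    · right
      simp only [Finset.mem_Icc] at h1 h2 ⊢
      simp only [Prod.map_fst, Prod.map_snd, shf]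
      constructor <;> split_ifs <;> omega
  · -- differences
    rw [hedges]
    have hcong : ∀ q ∈ cycleEdges C + pathEdges P,
        ((fun p : ℤ × ℤ => |p.1 - p.2|) ∘ Prod.map (shf u a b) (shf u a b)) q
          = |q.1 - q.2| + (b - a) := by
      intro q hq
      rcases hbip q hq with ⟨h1, h2⟩ | ⟨h1, h2⟩
      · simp only [Finset.mem_Icc] at h1 h2
        simp only [Function.comp_apply, Prod.map_fst, Prod.map_snd, shf]
        rw [if_pos (by omega), if_neg (by omega),
          abs_of_nonpos (by omega), abs_of_nonpos (by omega)]
        ring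
      · simp only [Finset.mem_Icc] at h1 h2
        simp only [Function.comp_apply, Prod.map_fst, Prod.map_snd, shf]
        rw [if_neg (by omega), if_pos (by omega),
          abs_of_nonneg (by omega), abs_of_nonneg (by omega)]
        ring
    show Multiset.map _ _ = _
    rw [Multiset.map_map, Multiset.map_congr rfl hcong,
      show (fun q : ℤ × ℤ => |q.1 - q.2| + (b-a))
        = (fun z => z + (b-a)) ∘ (fun p : ℤ × ℤ => |p.1 - p.2|) from rfl,
      ← Multiset.map_map,
      show Multiset.map (fun p : ℤ × ℤ => |p.1 - p.2|) (cycleEdges C + pathEdges P)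
        = (Finset.Icc (1:ℤ) (4*u+1)).val from hdiff,
      Icc_map_add 1 (4*u+1) (b-a),
      show (1:ℤ)+(b-a) = b-a+1 by ring, show 4*u+1+(b-a) = b-a+4*u+1 by ring]
  · -- head
    have hgu : shf u a b u = a + u := by
      simp only [shf]; rw [if_pos (by omega)]; ring
    rw [List.head?_map, hhead, Option.map_some, hgu]
  · -- last
    have hgu : shf u a b (3*u+1) = b + 3*u + 1 := by
      simp only [shf]; rw [if_neg (by omega)]; ring
    rw [List.getLast?_map, hlast, Option.map_some, hgu]

/-- The main gluing induction. -/
lemma auxGlue (u : ℤ) (hu : 1 ≤ u) (L' : List ℕ) :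
    L' ≠ [] → ∀ (a W : ℤ), W = (L'.length : ℤ) * (2*u+1) →
    (∀ l ∈ L', ∃ C P : List ℤ, C.length = l ∧
      (↑(C ++ P) : Multiset ℤ) = (Finset.Icc (0:ℤ) (4*u+1)).val ∧
      (∀ p ∈ cycleEdges C + pathEdges P,
        (p.1 ∈ Finset.Icc (0:ℤ) (2*u) ∧ p.2 ∈ Finset.Icc (2*u+1) (4*u+1)) ∨
        (p.1 ∈ Finset.Icc (2*u+1) (4*u+1) ∧ p.2 ∈ Finset.Icc (0:ℤ) (2*u))) ∧
      diffs (cycleEdges C + pathEdges P) = (Finset.Icc (1:ℤ) (4*u+1)).val ∧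
      P.head? = some u ∧ P.getLast? = some (3*u+1)) →
    ∃ (cycles : List (List ℤ)) (path : List ℤ),
      (↑(cycles.map List.length) : Multiset ℕ) = (↑L' : Multiset ℕ) ∧
      (↑(cycles.flatten ++ path) : Multiset ℤ) = (Finset.Icc a (a+2*W-1)).val ∧
      (∀ p ∈ (cycles.map cycleEdges).sum + pathEdges path,
        (p.1 ∈ Finset.Icc a (a+W-1) ∧ p.2 ∈ Finset.Icc (a+W) (a+2*W-1)) ∨
        (p.1 ∈ Finset.Icc (a+W) (a+2*W-1) ∧ p.2 ∈ Finset.Icc a (a+W-1))) ∧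
      diffs ((cycles.map cycleEdges).sum + pathEdges path) = (Finset.Icc 1 (2*W-1)).val ∧
      path.head? = some (a+u) ∧ path.getLast? = some (a+W+u) := by
  induction L' with
  | nil => intro h; exact absurd rfl h
  | cons l L ih =>
    intro _ a W hW hb
    obtain ⟨C, P, hC, hCP, hbip, hdiff, hhead, hlast⟩ := hb l List.mem_cons_self
    cases L with
    | nil =>
      -- base case : a single block
      have hW' : W = 2*u+1 := by rw [hW]; simp
      subst hW'
      obtain ⟨hv, hbip', hdiff', hhead', hlast'⟩ :=
        blockShift u a a hu le_rfl C P hCP hbip hdiff hhead hlast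
      refine ⟨[C.map (shf u a a)], P.map (shf u a a), ?_, ?_, ?_, ?_, ?_, ?_⟩
      · simp [hC]
      · rw [show ([C.map (shf u a a)] : List (List ℤ)).flatten = C.map (shf u a a) by simp,
          ← Multiset.coe_add, hv,
          show a+2*(2*u+1)-1 = a+4*u+1 by ring,
          Icc_split a (a+2*u) (a+4*u+1) (by omega) (by omega)]
      · rw [show (List.map cycleEdges [C.map (shf u a a)]).sum = cycleEdges (C.map (shf u a a)) by simp,
          show a+(2*u+1)-1 = a+2*u by ring, show a+2*(2*u+1)-1 = a+4*u+1 by ring,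
          show a+(2*u+1) = a+2*u+1 by ring]
        exact hbip'
      · rw [show (List.map cycleEdges [C.map (shf u a a)]).sum = cycleEdges (C.map (shf u a a)) by simp,
          show 2*(2*u+1)-1 = 4*u+1 by ring]
        rw [show a-a+1 = (1:ℤ) by ring, show a-a+4*u+1 = 4*u+1 by ring] at hdiff'
        exact hdiff'
      · exact hhead'
      · rw [show a+(2*u+1)+u = a+3*u+1 by ring]
        exact hlast'
    | cons l' L'' =>
      -- inductive step
      have hlen2 : (2:ℤ) ≤ ((l :: l' :: L'').length : ℤ) := by
        simp only [List.length_cons]; push_cast; omega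
      have hWb : 2*(2*u+1) ≤ W := by
        rw [hW]
        have h0 : (0:ℤ) ≤ 2*u+1 := by omega
        nlinarith [hlen2]
      have hW' : W - 2*u - 1 = ((l' :: L'').length : ℤ) * (2*u+1) := by
        rw [hW]; simp only [List.length_cons]; push_cast; ring
      obtain ⟨cycles₁, path₁, hlen₁, hv₁, hbip₁, hdiff₁, hhead₁, hlast₁⟩ :=
        ih (by simp) (a+2*u+1) (W-2*u-1) hW' (fun x hx => hb x (List.mem_cons_of_mem _ hx))
      obtain ⟨hv₀, hbip₀, hdiff₀, hhead₀, hlast₀⟩ :=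
        blockShift u a (a+2*W-4*u-2) hu (by omega) C P hCP hbip hdiff hhead hlast
      set Cg := C.map (shf u a (a+2*W-4*u-2)) with hCg
      set Pg := P.map (shf u a (a+2*W-4*u-2)) with hPg
      -- normalize endpoints
      rw [show a+2*W-4*u-2+2*u+1 = a+2*W-2*u-1 by ring,
        show a+2*W-4*u-2+4*u+1 = a+2*W-1 by ring] at hv₀ hbip₀
      rw [show a+2*W-4*u-2-a+1 = 2*W-4*u-1 by ring,
        show a+2*W-4*u-2-a+4*u+1 = 2*W-1 by ring] at hdiff₀
      rw [show a+2*W-4*u-2+3*u+1 = a+2*W-u-1 by ring] at hlast₀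
      rw [show a+2*u+1+2*(W-2*u-1)-1 = a+2*W-2*u-2 by ring] at hv₁ hbip₁
      rw [show a+2*u+1+(W-2*u-1)-1 = a+W-1 by ring,
        show a+2*u+1+(W-2*u-1) = a+W by ring] at hbip₁
      rw [show 2*(W-2*u-1)-1 = 2*W-4*u-3 by ring] at hdiff₁
      rw [show a+2*u+1+u = a+3*u+1 by ring] at hhead₁
      rw [show a+2*u+1+(W-2*u-1)+u = a+W+u by ring] at hlast₁
      have hET : ((Cg :: cycles₁).map cycleEdges).sum + pathEdges (Pg ++ path₁)
          = ((cycleEdges Cg + pathEdges Pg)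
              + ((cycles₁.map cycleEdges).sum + pathEdges path₁))
            + {(a+2*W-u-1, a+3*u+1)} := by
        rw [List.map_cons, List.sum_cons,
          pathEdges_append Pg path₁ (a+2*W-u-1) (a+3*u+1) hlast₀ hhead₁,
          ← Multiset.singleton_add]
        abel
      refine ⟨Cg :: cycles₁, Pg ++ path₁, ?_, ?_, ?_, ?_, ?_, ?_⟩
      · simp only [List.map_cons, ← Multiset.cons_coe, hlen₁, hCg, List.length_map, hC]
      · simp only [List.flatten_cons, ← Multiset.coe_add]
        rw [add_add_add_comm, hv₀, Multiset.coe_add, hv₁,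
          Icc_split a (a+2*u) (a+2*W-1) (by omega) (by omega),
          Icc_split (a+2*u+1) (a+2*W-2*u-2) (a+2*W-1) (by omega) (by omega),
          show a+2*W-2*u-2+1 = a+2*W-2*u-1 by ring]
        abel
      · intro p hp
        rw [hET] at hp
        rcases Multiset.mem_add.1 hp with hp | hp
        · rcases Multiset.mem_add.1 hp with hp | hp
          · rcases hbip₀ p hp with ⟨h1, h2⟩ | ⟨h1, h2⟩
            · left; simp only [Finset.mem_Icc] at h1 h2 ⊢; omega
            · right; simp only [Finset.mem_Icc] at h1 h2 ⊢; omega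
          · rcases hbip₁ p hp with ⟨h1, h2⟩ | ⟨h1, h2⟩
            · left; simp only [Finset.mem_Icc] at h1 h2 ⊢; omega
            · right; simp only [Finset.mem_Icc] at h1 h2 ⊢; omega
        · have hp' := Multiset.mem_singleton.1 hp
          subst hp'
          right; simp only [Finset.mem_Icc]; omega
      · rw [hET]
        simp only [diffs, Multiset.map_add, Multiset.map_singleton] at hdiff₀ hdiff₁ ⊢
        rw [hdiff₀, hdiff₁,
          show a+2*W-u-1 - (a+3*u+1) = 2*W-4*u-2 by ring,
          abs_of_nonneg (show (0:ℤ) ≤ 2*W-4*u-2 by omega),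
          Icc_split 1 (2*W-4*u-3) (2*W-1) (by omega) (by omega),
          show 2*W-4*u-3+1 = 2*W-4*u-2 by ring,
          Icc_split (2*W-4*u-2) (2*W-4*u-2) (2*W-1) (by omega) (by omega),
          show 2*W-4*u-2+1 = 2*W-4*u-1 by ring,
          Finset.Icc_self, Finset.singleton_val]
        abel
      · rw [List.head?_append, hhead₀]
        rfl
      · rw [List.getLast?_append, hlast₁]
        rfl

/-- the gluing construction for α-labelings with only even cycles.
Here `M = max L`, `k = 2M + 5`, `ε = 2|L|(M+3) - 1` and `m = ε - Σ L`. -/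
theorem stmt18 (ℓs : List ℕ) (hne : ℓs ≠ [])
    (heven : ∀ l ∈ ℓs, Even l) (hge : ∀ l ∈ ℓs, 4 ≤ l)
    (M k ε : ℕ) (hM : M = ℓs.foldr max 0) (hk : k = 2 * M + 5)
    (hε : ε + 1 = 2 * ℓs.length * (M + 3))
    (hblocks : ∀ l ∈ ℓs, ∃ C P : List ℤ,
      C.length = l ∧ C.length + P.length = k + 1 ∧
      (↑(C ++ P) : Multiset ℤ) = (Finset.Icc (0 : ℤ) (k : ℤ)).val ∧
      (∀ p ∈ cycleEdges C + pathEdges P,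
        (p.1 ∈ Finset.Icc (0 : ℤ) (((k : ℤ) - 1) / 2) ∧
          p.2 ∈ Finset.Icc (((k : ℤ) + 1) / 2) (k : ℤ)) ∨
        (p.1 ∈ Finset.Icc (((k : ℤ) + 1) / 2) (k : ℤ) ∧
          p.2 ∈ Finset.Icc (0 : ℤ) (((k : ℤ) - 1) / 2))) ∧
      diffs (cycleEdges C + pathEdges P) = (Finset.Icc (1 : ℤ) (k : ℤ)).val ∧
      P.head? = some (((k : ℤ) - 1) / 4) ∧
      P.getLast? = some (3 * (((k : ℤ) - 1) / 4) + 1)) :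
    ∃ (cycles : List (List ℤ)) (path : List ℤ),
      (↑(cycles.map List.length) : Multiset ℕ) = (↑ℓs : Multiset ℕ) ∧
      (↑(cycles.flatten ++ path) : Multiset ℤ) = (Finset.Icc (0 : ℤ) (ε : ℤ)).val ∧
      (∀ p ∈ (cycles.map cycleEdges).sum + pathEdges path,
        (p.1 ∈ Finset.Icc (0 : ℤ) (((ε : ℤ) - 1) / 2) ∧
          p.2 ∈ Finset.Icc (((ε : ℤ) + 1) / 2) (ε : ℤ)) ∨
        (p.1 ∈ Finset.Icc (((ε : ℤ) + 1) / 2) (ε : ℤ) ∧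
          p.2 ∈ Finset.Icc (0 : ℤ) (((ε : ℤ) - 1) / 2))) ∧
      diffs ((cycles.map cycleEdges).sum + pathEdges path)
        = (Finset.Icc (1 : ℤ) (ε : ℤ)).val ∧
      path.head? = some ((M : ℤ) / 2 + 1) ∧
      path.getLast? = some (((ε : ℤ) + (M : ℤ) + 3) / 2) := by
  obtain ⟨x, xs, hxl⟩ := List.exists_cons_of_ne_nil hne
  have hxle : x ≤ ℓs.foldr max 0 := by
    rw [hxl, List.foldr_cons]; exact Nat.le_max_left _ _
  have hMmem : M ∈ ℓs := by
    rcases foldr_max_mem ℓs hne with h | h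
    · rwa [hM]
    · exfalso
      have hx4 := hge x (by rw [hxl]; exact List.mem_cons_self)
      omega
  obtain ⟨m, hm⟩ := heven M hMmem
  set u : ℤ := (m : ℤ) + 1 with hu_def
  have hu : 1 ≤ u := by omega
  have hkZ : (k : ℤ) = 4*u+1 := by
    rw [hu_def]; push_cast [hk, hm]; ring
  have hb : ∀ l ∈ ℓs, ∃ C P : List ℤ, C.length = l ∧
      (↑(C ++ P) : Multiset ℤ) = (Finset.Icc (0:ℤ) (4*u+1)).val ∧
      (∀ p ∈ cycleEdges C + pathEdges P,
        (p.1 ∈ Finset.Icc (0:ℤ) (2*u) ∧ p.2 ∈ Finset.Icc (2*u+1) (4*u+1)) ∨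
        (p.1 ∈ Finset.Icc (2*u+1) (4*u+1) ∧ p.2 ∈ Finset.Icc (0:ℤ) (2*u))) ∧
      diffs (cycleEdges C + pathEdges P) = (Finset.Icc (1:ℤ) (4*u+1)).val ∧
      P.head? = some u ∧ P.getLast? = some (3*u+1) := by
    intro l hl
    obtain ⟨C, P, h1, _, h3, h4, h5, h6, h7⟩ := hblocks l hl
    refine ⟨C, P, h1, ?_, ?_, ?_, ?_, ?_⟩
    · rwa [hkZ] at h3
    · rw [show ((k:ℤ)-1)/2 = 2*u from by rw [hkZ]; omega,
        show ((k:ℤ)+1)/2 = 2*u+1 from by rw [hkZ]; omega, hkZ] at h4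
      exact h4
    · rwa [hkZ] at h5
    · rwa [show ((k:ℤ)-1)/4 = u from by rw [hkZ]; omega] at h6
    · rwa [show ((k:ℤ)-1)/4 = u from by rw [hkZ]; omega] at h7
  obtain ⟨cycles, path, r1, r2, r3, r4, r5, r6⟩ :=
    auxGlue u hu ℓs hne 0 ((ℓs.length : ℤ) * (2*u+1)) rfl hb
  set W : ℤ := (ℓs.length : ℤ) * (2*u+1) with hW_def
  have h2' : (ε:ℤ) + 1 = 2*(ℓs.length:ℤ)*((M:ℤ)+3) := by exact_mod_cast hε
  have h3' : (M:ℤ)+3 = 2*u+1 := by rw [hu_def]; push_cast [hm]; ring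
  have hεZ : (ε:ℤ) = 2*W-1 := by
    have : (ε:ℤ) = 2*(ℓs.length:ℤ)*((M:ℤ)+3) - 1 := by linarith
    rw [this, h3', hW_def]; ring
  have hMZ : (M:ℤ) = (m:ℤ) + (m:ℤ) := by exact_mod_cast hm
  refine ⟨cycles, path, r1, ?_, ?_, ?_, ?_, ?_⟩
  · rwa [show (ε:ℤ) = 0+2*W-1 by omega]
  · intro p hp
    have := r3 p hp
    rw [show ((ε:ℤ)-1)/2 = 0+W-1 by omega, show ((ε:ℤ)+1)/2 = 0+W by omega,
      show (ε:ℤ) = 0+2*W-1 by omega]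
    exact this
  · rwa [show (ε:ℤ) = 2*W-1 from hεZ, show (1:ℤ) = (1:ℤ) from rfl]
  · rwa [show ((M:ℤ))/2+1 = 0+u by omega]
  · rwa [show ((ε:ℤ)+(M:ℤ)+3)/2 = 0+W+u by omega]
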